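/- Let $\alpha \in (0,1)$, let $0 = t_0 < t_1 < \dots < t_N = T$ be any partition with steps $\tau_j = t_j - t_{j-1}$, let $V$ be a real inner product space, and let $u^0, u^1, \dots, u^n \in V$ with $1 \le n \le N$. Then the L1 approximation of the Caputo derivative satisfies $\left\langle \sum_{j=1}^{n} k_{n,j}\,(u^{j} - u^{j-1}),\; u^{n} \right\rangle \;\ge\; \frac{1}{2} \sum_{j=1}^{n} k_{n,j}\,\big(\|u^{j}\|^2 - \|u^{j-1}\|^2\big).$ -/

import Mathlib

open RealInnerProductSpace

/-- For `α ∈ (0,1)`, any partition `0 = t 0 < t 1 < ⋯ < t N = T`, a real inner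
product space `V` and vectors `u 0, …, u n` in `V` with `1 ≤ n ≤ N`, the L1
approximation of the Caputo derivative satisfies
`⟪∑ j ∈ Icc 1 n, k n j • (u j - u (j-1)), u n⟫ ≥ (1/2) ∑ j, k n j * (‖u j‖² - ‖u (j-1)‖²)`. -/
lemma abel_id (a c : ℕ → ℝ) : ∀ n, 1 ≤ n →
    ∑ j ∈ Finset.Icc 1 n, a j * (c (j-1) - c j)
      = a 1 * c 0 - a n * c n + ∑ j ∈ Finset.Icc 1 (n-1), (a (j+1) - a j) * c j := by
  intro n
  induction n with
  | zero => omega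
  | succ m ih =>
    intro _
    rcases Nat.eq_zero_or_pos m with rfl | hm
    · simp; ring
    · have h1 : ∑ j ∈ Finset.Icc 1 (m+1), a j * (c (j-1) - c j)
          = (∑ j ∈ Finset.Icc 1 m, a j * (c (j-1) - c j)) + a (m+1) * (c m - c (m+1)) := by
        rw [Finset.sum_Icc_succ_top (by omega : 1 ≤ m+1)]
        norm_num
      have h2 : ∑ j ∈ Finset.Icc 1 (m+1-1), (a (j+1) - a j) * c j
          = (∑ j ∈ Finset.Icc 1 (m-1), (a (j+1) - a j) * c j) + (a (m+1) - a m) * c m := by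
        have hmm : m - 1 + 1 = m := by omega
        have := Finset.sum_Icc_succ_top (by omega : 1 ≤ m - 1 + 1)
          (f := fun j => (a (j+1) - a j) * c j)
        rw [hmm] at this
        simpa using this
      rw [h1, h2, ih hm]
      ring

theorem L1_discrete_derivative_positivity
    {V : Type*} [NormedAddCommGroup V] [InnerProductSpace ℝ V]
    (α : ℝ) (hα : α ∈ Set.Ioo (0 : ℝ) 1)
    (N : ℕ) (T : ℝ) (t : ℕ → ℝ)
    (ht0 : t 0 = 0) (htN : t N = T)
    (hmono : ∀ i j, i < j → j ≤ N → t i < t j)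
    (τ : ℕ → ℝ) (hτ : ∀ j, 1 ≤ j → τ j = t j - t (j - 1))
    (k : ℕ → ℕ → ℝ)
    (hk : ∀ n j, 1 ≤ j → j ≤ n →
      k n j = (τ j)⁻¹ / Real.Gamma (1 - α) * ∫ s in (t (j - 1))..(t j), (t n - s) ^ (-α))
    (n : ℕ) (hn1 : 1 ≤ n) (hn2 : n ≤ N)
    (u : ℕ → V) :
    (1 / 2 : ℝ) * ∑ j ∈ Finset.Icc 1 n, k n j * (‖u j‖ ^ 2 - ‖u (j - 1)‖ ^ 2) ≤
      ⟪∑ j ∈ Finset.Icc 1 n, k n j • (u j - u (j - 1)), u n⟫ := by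
  obtain ⟨hα0, hα1⟩ := hα
  have hβ0 : (0:ℝ) < 1 - α := by linarith
  have hβ1 : (1:ℝ) - α ≤ 1 := by linarith
  have hΓ : 0 < Real.Gamma (1 - α) := Real.Gamma_pos_of_pos hβ0
  have hle : ∀ j, j ≤ n → t j ≤ t n := by
    intro j hj
    rcases eq_or_lt_of_le hj with rfl | h
    · exact le_refl _
    · exact (hmono j n h hn2).le
  have hlt : ∀ i j, i < j → j ≤ n → t i < t j :=
    fun i j hij hj => hmono i j hij (hj.trans hn2)
  -- closed form for k n j
  have hI : ∀ j, 1 ≤ j → j ≤ n →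
      k n j = ((t n - t (j-1)) ^ (1-α) - (t n - t j) ^ (1-α)) /
        ((t n - t (j-1)) - (t n - t j)) * ((1-α) * Real.Gamma (1-α))⁻¹ := by
    intro j hj1 hjn
    have hcomp : (∫ s in t (j-1)..t j, (t n - s) ^ (-α))
        = ∫ x in (t n - t j)..(t n - t (j-1)), x ^ (-α) :=
      intervalIntegral.integral_comp_sub_left (fun x : ℝ => x ^ (-α)) (t n)
    rw [hk n j hj1 hjn, hτ j hj1, hcomp,
      integral_rpow (Or.inl (by linarith : (-1:ℝ) < -α))]
    have h1 : -α + 1 = 1 - α := by ring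
    have h2 : (t n - t (j-1)) - (t n - t j) = t j - t (j-1) := by ring
    rw [h1, h2, mul_inv]
    field_simp
  -- nonnegativity of the kernels
  have hknn : ∀ j, 1 ≤ j → j ≤ n → 0 ≤ k n j := by
    intro j hj1 hjn
    rw [hI j hj1 hjn]
    have hy0 : 0 ≤ t n - t j := by linarith [hle j hjn]
    have hyz : t (j-1) < t j := hlt (j-1) j (by omega) hjn
    have hnum : (t n - t j) ^ (1-α) ≤ (t n - t (j-1)) ^ (1-α) :=
      Real.rpow_le_rpow hy0 (by linarith) (le_of_lt hβ0)
    have hden : 0 < (t n - t (j-1)) - (t n - t j) := by linarith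
    have hinv : 0 ≤ ((1-α) * Real.Gamma (1-α))⁻¹ :=
      inv_nonneg.mpr (mul_pos hβ0 hΓ).le
    exact mul_nonneg (div_nonneg (by linarith) hden.le) hinv
  -- monotonicity of the kernels
  have hkmono : ∀ j, 1 ≤ j → j + 1 ≤ n → k n j ≤ k n (j+1) := by
    intro j hj1 hjn
    have hx : t n - t (j+1) ∈ Set.Ici (0:ℝ) := by
      simp only [Set.mem_Ici]; linarith [hle (j+1) hjn]
    have hz : t n - t (j-1) ∈ Set.Ici (0:ℝ) := by
      simp only [Set.mem_Ici]
      linarith [hle (j-1) (by omega : j - 1 ≤ n)]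
    have hxy : t n - t (j+1) < t n - t j := by
      have := hlt j (j+1) (by omega) hjn
      linarith
    have hyz : t n - t j < t n - t (j-1) := by
      have := hlt (j-1) j (by omega) (by omega)
      linarith
    have hslope := (Real.concaveOn_rpow (le_of_lt hβ0) hβ1).slope_anti_adjacent
      hx hz hxy hyz
    rw [hI j hj1 (by omega), hI (j+1) (by omega) hjn]
    have hred : (j + 1 : ℕ) - 1 = j := rfl
    rw [hred]
    have hpos : (0:ℝ) ≤ ((1-α) * Real.Gamma (1-α))⁻¹ := by positivity
    exact mul_le_mul_of_nonneg_right hslope hpos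
  -- the algebraic part
  set c : ℕ → ℝ := fun j => ‖u j - u n‖ ^ 2 with hc
  have hinner : ∀ j, (2:ℝ) * ⟪u j - u (j-1), u n⟫
      = (‖u j‖^2 - ‖u (j-1)‖^2) + (c (j-1) - c j) := by
    intro j
    have h1 : ‖u j - u n‖^2 = ‖u j‖^2 - 2 * ⟪u j, u n⟫ + ‖u n‖^2 :=
      norm_sub_sq_real _ _
    have h2 : ‖u (j-1) - u n‖^2 = ‖u (j-1)‖^2 - 2 * ⟪u (j-1), u n⟫ + ‖u n‖^2 :=
      norm_sub_sq_real _ _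
    have h3 : ⟪u j - u (j-1), u n⟫ = ⟪u j, u n⟫ - ⟪u (j-1), u n⟫ :=
      inner_sub_left _ _ _
    simp only [hc]
    linarith
  have hsplit : ⟪∑ j ∈ Finset.Icc 1 n, k n j • (u j - u (j - 1)), u n⟫
      = (1/2:ℝ) * ∑ j ∈ Finset.Icc 1 n, k n j * (‖u j‖^2 - ‖u (j-1)‖^2)
        + (1/2:ℝ) * ∑ j ∈ Finset.Icc 1 n, k n j * (c (j-1) - c j) := by
    rw [sum_inner, Finset.mul_sum, Finset.mul_sum, ← Finset.sum_add_distrib]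
    refine Finset.sum_congr rfl fun j _ => ?_
    rw [real_inner_smul_left]
    have hX : ⟪u j - u (j-1), u n⟫
        = ((‖u j‖^2 - ‖u (j-1)‖^2) + (c (j-1) - c j)) / 2 := by
      linarith [hinner j]
    rw [hX]; ring
  rw [hsplit]
  have h0 : 0 ≤ ∑ j ∈ Finset.Icc 1 n, k n j * (c (j-1) - c j) := by
    rw [abel_id (k n) c n hn1]
    have hcn : c n = 0 := by simp [hc]
    have hc0 : 0 ≤ c 0 := by positivity
    have hsum : 0 ≤ ∑ j ∈ Finset.Icc 1 (n-1), (k n (j+1) - k n j) * c j := by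
      refine Finset.sum_nonneg fun j hj => ?_
      rw [Finset.mem_Icc] at hj
      have h1 : 0 ≤ k n (j+1) - k n j :=
        sub_nonneg.mpr (hkmono j hj.1 (by omega))
      have h2 : 0 ≤ c j := by positivity
      exact mul_nonneg h1 h2
    have hk1 : 0 ≤ k n 1 := hknn 1 le_rfl hn1
    rw [hcn]
    nlinarith
  linarith
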